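/- Any two distinct columns of the sparse Kerdock matrix S^m sharing the same indices a2 and b (hence with a1^1 ≠ a1^2) are orthogonal: the sum over all rows (u1, u2) of S^m_{(u1,u2),(a1^1,a2,b)} · S^m_{(u1,u2),(a1^2,a2,b)} equals 0. -/

import Mathlib

/-- Binary vectors of length `m`. -/
abbrev BV (m : ℕ) := Fin m → ZMod 2

/-- Row indices of the sparse Kerdock matrix: pairs `(u1, u2)`. -/
abbrev KRow (m : ℕ) := BV m × BV m

/-- Column indices of the sparse Kerdock matrix: triples `(a1, a2, b)`. -/
abbrev KCol (m : ℕ) := BV m × BV m × BV m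

/-- `P` is a Kerdock set: a family of symmetric binary matrices such that the sum of
any two distinct members is invertible. -/
def IsKerdockSet {m : ℕ} (P : BV m → Matrix (Fin m) (Fin m) (ZMod 2)) : Prop :=
  (∀ b, (P b).IsSymm) ∧ ∀ b b', b ≠ b' → IsUnit (P b + P b')

/-- Entry of the sparse Kerdock matrix `S^m` at row `(u1, u2)` and column `(a1, a2, b)`:
`2^{-m/2} * (-1)^{⟨u1, a1⟩}` if `u1 (P b) + u2 = a2`, and `0` otherwise. -/
noncomputable def kerdockEntry (m : ℕ) (P : BV m → Matrix (Fin m) (Fin m) (ZMod 2))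
    (u : KRow m) (c : KCol m) : ℝ :=
  if Matrix.vecMul u.1 (P c.2.2) + u.2 = c.2.1 then
    (Real.sqrt (2 ^ m))⁻¹ * (-1 : ℝ) ^ ((∑ i, u.1 i * c.1 i).val)
  else 0

lemma neg_one_pow_val_add (x y : ZMod 2) :
    (-1 : ℝ) ^ ((x + y).val) = (-1:ℝ) ^ x.val * (-1:ℝ) ^ y.val := by
  rw [← pow_add, ZMod.val_add, neg_one_pow_eq_pow_mod_two (R := ℝ) (n := x.val + y.val)]

lemma char_sum {m : ℕ} (a : BV m) (ha : a ≠ 0) :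
    ∑ u : BV m, (-1 : ℝ) ^ ((∑ i, u i * a i).val) = 0 := by
  obtain ⟨j, hj⟩ : ∃ j, a j ≠ 0 := by
    by_contra h; push_neg at h; exact ha (funext h)
  have haj : a j = 1 := by
    have : ∀ x : ZMod 2, x ≠ 0 → x = 1 := by decide
    exact this _ hj
  set f : BV m → ℝ := fun u => (-1 : ℝ) ^ ((∑ i, u i * a i).val) with hf
  set v : BV m := Pi.single j 1 with hv
  have hS : ∑ u : BV m, f u = -∑ u : BV m, f u := by
    have h1 : ∑ u : BV m, f (u + v) = ∑ u : BV m, f u :=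
      Fintype.sum_equiv (Equiv.addRight v) _ _ (fun u => rfl)
    have h2 : ∀ u : BV m, f (u + v) = - f u := by
      intro u
      have he : ∑ i, (u + v) i * a i = (∑ i, u i * a i) + 1 := by
        simp only [Pi.add_apply, add_mul, Finset.sum_add_distrib]
        congr 1
        rw [Finset.sum_eq_single j]
        · simp [hv, haj]
        · intro i _ hi; simp [hv, Pi.single_apply, hi]
        · simp
      have hneg : ∀ x : ZMod 2, (-1 : ℝ) ^ ((x + 1).val) = -(-1 : ℝ) ^ x.val := by
        intro x; rw [neg_one_pow_val_add, ZMod.val_one, pow_one, mul_neg_one]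
      rw [hf]; simp only; rw [he, hneg]
    calc ∑ u : BV m, f u = ∑ u : BV m, f (u + v) := h1.symm
      _ = ∑ u : BV m, -f u := Finset.sum_congr rfl (fun u _ => h2 u)
      _ = -∑ u : BV m, f u := by rw [Finset.sum_neg_distrib]
  linarith


/-- Two distinct columns of `S^m` sharing the same `a2` and `b` are orthogonal. -/
theorem sparse_kerdock_same_a2_b_orthogonal (m : ℕ) (hm : 1 ≤ m)
    (P : BV m → Matrix (Fin m) (Fin m) (ZMod 2)) (hP : IsKerdockSet P)
    (a11 a12 a2 b : BV m) (ha : a11 ≠ a12) :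
    ∑ u : KRow m, kerdockEntry m P u (a11, a2, b) * kerdockEntry m P u (a12, a2, b) = 0 := by
  rw [Fintype.sum_prod_type]
  have key : ∀ u1 : BV m,
      ∑ u2 : BV m, kerdockEntry m P (u1, u2) (a11, a2, b) * kerdockEntry m P (u1, u2) (a12, a2, b)
      = (Real.sqrt (2 ^ m))⁻¹ ^ 2 * (-1 : ℝ) ^ ((∑ i, u1 i * (a11 + a12) i).val) := by
    intro u1
    have hc : ∀ u2 : BV m,
        (Matrix.vecMul u1 (P b) + u2 = a2) = (u2 = a2 - Matrix.vecMul u1 (P b)) :=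
      fun u2 => propext eq_sub_iff_add_eq'.symm
    simp only [kerdockEntry, hc, ite_mul, zero_mul, mul_zero, mul_ite]
    rw [Finset.sum_ite_eq' Finset.univ (a2 - Matrix.vecMul u1 (P b))]
    simp only [Finset.mem_univ, if_true]
    have : ∑ i, u1 i * (a11 + a12) i = (∑ i, u1 i * a11 i) + (∑ i, u1 i * a12 i) := by
      simp [mul_add, Finset.sum_add_distrib]
    rw [this, neg_one_pow_val_add]
    ring
  simp only [key]
  rw [← Finset.mul_sum, char_sum (a11 + a12), mul_zero]
  intro h
  apply ha
  funext i
  have := congrFun h i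
  simp only [Pi.add_apply, Pi.zero_apply] at this
  have h2 : ∀ x y : ZMod 2, x + y = 0 → x = y := by decide
  exact h2 _ _ this
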